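/- Let F : ℤ² → ℝ be symmetric with |F(n,m)| ≤ C ∑_{j=n+m}^{∞} q(j) for a fixed constant C > 0 and q : ℤ → [0,∞) with ∑_{j} (1+|j|) q(j) < ∞. Then for each fixed n, the operator (𝓕 f)(m) = ∑_{l=n}^{∞} F(l,m) f(l) is a compact (indeed summable-kernel, hence bounded with finite-rank approximation) operator on ℓ¹({n, n+1, ...}). -/

import Mathlib

open Filter Set Topology

set_option maxHeartbeats 1000000

section glmHelpers

variable {X : Type*} [NormedAddCommGroup X] [NormedSpace ℝ X]

lemma glm_functional_isCompactOperator (φ : X →L[ℝ] ℝ) : IsCompactOperator φ := by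
  refine ⟨Metric.closedBall 0 ‖φ‖, isCompact_closedBall _ _, ?_⟩
  refine Filter.mem_of_superset (Metric.ball_mem_nhds 0 one_pos) ?_
  intro x hx
  simp only [Set.mem_preimage, Metric.mem_closedBall, dist_zero_right]
  calc ‖φ x‖ ≤ ‖φ‖ * ‖x‖ := φ.le_opNorm x
    _ ≤ ‖φ‖ * 1 := by
        have := (mem_ball_zero_iff.mp hx).le
        nlinarith [norm_nonneg φ]
    _ = ‖φ‖ := mul_one _

lemma glm_rankone_isCompactOperator {Y : Type*} [NormedAddCommGroup Y] [NormedSpace ℝ Y]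
    (φ : X →L[ℝ] ℝ) (v : Y) : IsCompactOperator (φ.smulRight v) := by
  have h1 : Continuous (fun c : ℝ => c • v) := continuous_id.smul continuous_const
  exact (glm_functional_isCompactOperator φ).continuous_comp h1

end glmHelpers

/-- a symmetric kernel `F` with the decay bound
`|F(l,m)| ≤ C ∑_{j ≥ l+m} q(j)`, where `∑_{j ≥ 2n} (1+|j|) q(j) < ∞`, induces a
compact operator `(𝓕 f)(m) = ∑_{l ≥ n} F(l,m) f(l)` on `ℓ¹({n, n+1, …})`. -/
theorem glm_kernel_compact (n : ℤ) (F : ℤ → ℤ → ℝ)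
    (hsym : ∀ l m : ℤ, F l m = F m l)
    (C : ℝ) (hC : 0 < C) (q : ℤ → ℝ) (hq0 : ∀ j, 0 ≤ q j)
    (hqsum : Summable (fun j : {j : ℤ // 2 * n ≤ j} => (1 + |(j.1 : ℝ)|) * q j.1))
    (hF : ∀ l m : ℤ, n ≤ l → n ≤ m →
      |F l m| ≤ C * ∑' j : {j : ℤ // l + m ≤ j}, q j.1) :
    ∃ T : lp (fun _ : {m : ℤ // n ≤ m} => ℝ) 1 →L[ℝ] lp (fun _ : {m : ℤ // n ≤ m} => ℝ) 1,
      IsCompactOperator T ∧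
      ∀ (f : lp (fun _ : {m : ℤ // n ≤ m} => ℝ) 1) (m : {m : ℤ // n ≤ m}),
        (T f : ∀ _ : {m : ℤ // n ≤ m}, ℝ) m = ∑' l : {l : ℤ // n ≤ l}, F l.1 m.1 * f l := by
  classical
  set qI : ℤ → ℤ → ℝ := fun t => ({j : ℤ | t ≤ j}).indicator q with hqI
  have hqI0 : ∀ t j, 0 ≤ qI t j := fun t j => Set.indicator_nonneg (fun j _ => hq0 j) j
  have hW0 : Summable (({j : ℤ | 2 * n ≤ j}).indicator (fun j => (1 + |(j : ℝ)|) * q j)) := by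
    rw [← summable_subtype_iff_indicator]
    exact hqsum
  have hq2n : Summable (qI (2 * n)) := by
    rw [hqI, ← summable_subtype_iff_indicator]
    refine Summable.of_nonneg_of_le (fun j => hq0 _) (fun j => ?_) hqsum
    show q j.1 ≤ (1 + |(j.1 : ℝ)|) * q j.1
    nlinarith [hq0 j.1, abs_nonneg ((j.1 : ℝ))]
  have hqIsum : ∀ t, 2 * n ≤ t → Summable (qI t) := by
    intro t ht
    have hsub : {j : ℤ | t ≤ j} ⊆ {j : ℤ | 2 * n ≤ j} := fun j hj => le_trans ht hj
    have : qI t = ({j : ℤ | t ≤ j}).indicator (qI (2 * n)) := by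
      rw [hqI]; rw [Set.indicator_indicator, Set.inter_eq_left.mpr hsub]
    rw [this]
    exact hq2n.indicator _
  set tail : ℤ → ℝ := fun t => ∑' j, qI t j with htail
  have htail_nonneg : ∀ t, 0 ≤ tail t := fun t => tsum_nonneg (fun j => hqI0 t j)
  have htail_mono : ∀ t t', 2 * n ≤ t → t ≤ t' → tail t' ≤ tail t := by
    intro t t' ht htt'
    refine Summable.tsum_le_tsum (fun j => ?_) (hqIsum _ (le_trans ht htt')) (hqIsum _ ht)
    exact Set.indicator_le_indicator_of_subset (fun j hj => le_trans htt' hj)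
      (fun j => hq0 j) j
  set g : {m : ℤ // n ≤ m} → ℝ := fun m => tail (n + m.1) with hgdef
  have hg0 : ∀ m : {m : ℤ // n ≤ m}, 0 ≤ g m := fun m => htail_nonneg _
  -- summability of g
  have hg : Summable g := by
    have key : Summable (fun k : ℕ => tail (2 * n + k)) := by
      set W : ℤ → ℝ := ({j : ℤ | 2 * n ≤ j}).indicator
        (fun j => (1 + 2*|(n : ℝ)|) * ((1 + |(j : ℝ)|) * q j)) with hW
      have hWsum : Summable W := by
        rw [hW]
        have := hW0.mul_left (1 + 2*|(n : ℝ)|)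
        refine this.congr fun j => ?_
        rw [← Set.indicator_const_mul]
      refine summable_of_sum_range_le (c := ∑' j, W j)
        (fun k => tsum_nonneg (fun j => hqI0 _ j)) (fun K => ?_)
      have hswap : ∑ k ∈ Finset.range K, tail (2 * n + k)
          = ∑' j, ∑ k ∈ Finset.range K, qI (2 * n + k) j := by
        rw [Summable.tsum_finsetSum (fun k _ => hqIsum _ (by omega))]
      rw [hswap]
      refine Summable.tsum_le_tsum (fun j => ?_) (summable_sum (fun k _ => hqIsum _ (by omega))) hWsum
      by_cases hj : 2 * n ≤ j
      · have hterm : ∀ k : ℕ, qI (2 * n + k) j = if 2 * n + (k:ℤ) ≤ j then q j else 0 := by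
          intro k
          rw [hqI]
          simp [Set.indicator_apply, Set.mem_setOf_eq]
        have hcount : ∑ k ∈ Finset.range K, qI (2 * n + k) j
            = ((Finset.range K).filter (fun k : ℕ => 2 * n + (k:ℤ) ≤ j)).card * q j := by
          simp_rw [hterm]
          rw [← Finset.sum_filter, Finset.sum_const, nsmul_eq_mul]
        rw [hcount]
        set t := (j - 2 * n).toNat with htn
        have hcard : ((Finset.range K).filter (fun k : ℕ => 2 * n + (k:ℤ) ≤ j)).card ≤ t + 1 := by
          have hsub : (Finset.range K).filter (fun k : ℕ => 2 * n + (k:ℤ) ≤ j)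
              ⊆ Finset.range (t+1) := by
            intro k hk
            simp only [Finset.mem_filter, Finset.mem_range] at hk ⊢
            omega
          simpa using Finset.card_le_card hsub
        have hWj : W j = (1 + 2*|(n : ℝ)|) * ((1 + |(j : ℝ)|) * q j) := by
          rw [hW]; exact Set.indicator_of_mem (show j ∈ {j : ℤ | 2 * n ≤ j} from hj) _
        rw [hWj]
        have ht1 : ((t:ℝ) + 1) ≤ (1 + 2*|(n : ℝ)|) * (1 + |(j : ℝ)|) := by
          have htr : (t:ℝ) = ((j : ℝ) - 2 * (n:ℝ)) := by
            rw [htn]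
            have : ((j - 2*n).toNat : ℤ) = j - 2*n := Int.toNat_of_nonneg (by omega)
            have := congrArg (fun z : ℤ => (z : ℝ)) this
            push_cast at this ⊢
            linarith
          rw [htr]
          have h1 : (j:ℝ) ≤ |(j:ℝ)| := le_abs_self _
          have h2 : -(n:ℝ) ≤ |(n:ℝ)| := neg_le_abs _
          nlinarith [abs_nonneg ((n:ℝ)), abs_nonneg ((j:ℝ)),
            mul_nonneg (abs_nonneg ((n:ℝ))) (abs_nonneg ((j:ℝ)))]
        calc (((Finset.range K).filter (fun k : ℕ => 2 * n + (k:ℤ) ≤ j)).card : ℝ) * q j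
            ≤ ((t:ℝ) + 1) * q j := by
              have : (((Finset.range K).filter
                  (fun k : ℕ => 2 * n + (k:ℤ) ≤ j)).card : ℝ) ≤ (t:ℝ) + 1 := by
                exact_mod_cast hcard
              exact mul_le_mul_of_nonneg_right this (hq0 j)
          _ ≤ (1 + 2*|(n : ℝ)|) * ((1 + |(j : ℝ)|) * q j) := by
              rw [← mul_assoc]
              exact mul_le_mul_of_nonneg_right ht1 (hq0 j)
      · have hzero : ∀ k ∈ Finset.range K, qI (2 * n + k) j = 0 := by
          intro k _
          rw [hqI]
          exact Set.indicator_of_notMem (by simp only [Set.mem_setOf_eq]; omega) _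
        rw [Finset.sum_congr rfl hzero, Finset.sum_const, smul_zero]
        exact Set.indicator_nonneg
          (fun j _ => mul_nonneg (by positivity) (mul_nonneg (by positivity) (hq0 j))) j
    set e : ℕ ≃ {m : ℤ // n ≤ m} :=
      { toFun := fun k => ⟨n + k, le_add_of_nonneg_right (by positivity)⟩
        invFun := fun m => (m.1 - n).toNat
        left_inv := fun k => by simp
        right_inv := fun m => by
          ext
          have := m.2
          simp only
          omega } with he
    rw [← e.summable_iff]
    refine key.congr fun k => ?_
    show tail (2 * n + k) = tail (n + (n + (k:ℤ)))
    ring_nf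
  -- the pointwise kernel bound
  have hFg : ∀ (l m : {m : ℤ // n ≤ m}), |F l.1 m.1| ≤ C * g m := by
    intro l m
    have h1 := hF l.1 m.1 l.2 m.2
    have h2 : (∑' j : {j : ℤ // l.1 + m.1 ≤ j}, q j.1) = tail (l.1 + m.1) :=
      tsum_subtype {j : ℤ | l.1 + m.1 ≤ j} q
    rw [h2] at h1
    refine le_trans h1 ?_
    refine mul_le_mul_of_nonneg_left ?_ hC.le
    exact htail_mono _ _ (by have := m.2; omega) (by have := l.2; omega)
  -- norm facts on lp (fun _ : {m : ℤ // n ≤ m} => ℝ) 1 = ℓ¹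
  have hnorm_sum : ∀ f : lp (fun _ : {m : ℤ // n ≤ m} => ℝ) 1, HasSum (fun i : {m : ℤ // n ≤ m} => ‖f i‖) ‖f‖ := by
    intro f
    have := lp.hasSum_norm (p := 1) (by norm_num) f
    simpa [Real.rpow_one] using this
  have hsummable_norm : ∀ f : lp (fun _ : {m : ℤ // n ≤ m} => ℝ) 1, Summable (fun i : {m : ℤ // n ≤ m} => ‖f i‖) := fun f => (hnorm_sum f).summable
  have hnorm_eq : ∀ f : lp (fun _ : {m : ℤ // n ≤ m} => ℝ) 1, ‖f‖ = ∑' i : {m : ℤ // n ≤ m}, ‖f i‖ := fun f => ((hnorm_sum f).tsum_eq).symm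
  -- rows are summable
  have hrow : ∀ (f : lp (fun _ : {m : ℤ // n ≤ m} => ℝ) 1) (m : {m : ℤ // n ≤ m}), Summable (fun l : {m : ℤ // n ≤ m} => F l.1 m.1 * f l) := by
    intro f m
    refine Summable.of_norm_bounded (g := fun l => (C * g m) * ‖f l‖)
      ((hsummable_norm f).mul_left _) (fun l => ?_)
    rw [norm_mul]
    exact mul_le_mul_of_nonneg_right (by simpa [Real.norm_eq_abs] using hFg l m) (norm_nonneg _)
  have hrown : ∀ (f : lp (fun _ : {m : ℤ // n ≤ m} => ℝ) 1) (m : {m : ℤ // n ≤ m}), Summable (fun l : {m : ℤ // n ≤ m} => ‖F l.1 m.1 * f l‖) := by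
    intro f m
    refine Summable.of_nonneg_of_le (fun l => norm_nonneg _) (fun l => ?_)
      ((hsummable_norm f).mul_left (C * g m))
    rw [norm_mul]
    exact mul_le_mul_of_nonneg_right (by simpa [Real.norm_eq_abs] using hFg l m) (norm_nonneg _)
  set Tf : lp (fun _ : {m : ℤ // n ≤ m} => ℝ) 1 → ({m : ℤ // n ≤ m} → ℝ) := fun f m => ∑' l : {m : ℤ // n ≤ m}, F l.1 m.1 * f l with hTf
  have habs : ∀ (f : lp (fun _ : {m : ℤ // n ≤ m} => ℝ) 1) (m : {m : ℤ // n ≤ m}), ‖Tf f m‖ ≤ C * ‖f‖ * g m := by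
    intro f m
    calc ‖Tf f m‖ ≤ ∑' l : {m : ℤ // n ≤ m}, ‖F l.1 m.1 * f l‖ := norm_tsum_le_tsum_norm (hrown f m)
      _ ≤ ∑' l : {m : ℤ // n ≤ m}, (C * g m) * ‖f l‖ := by
          refine Summable.tsum_le_tsum (fun l => ?_) (hrown f m) ((hsummable_norm f).mul_left _)
          rw [norm_mul]
          exact mul_le_mul_of_nonneg_right (by simpa [Real.norm_eq_abs] using hFg l m)
            (norm_nonneg _)
      _ = (C * g m) * ∑' l : {m : ℤ // n ≤ m}, ‖f l‖ := tsum_mul_left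
      _ = C * ‖f‖ * g m := by rw [← hnorm_eq f]; ring
  have hmem : ∀ f : lp (fun _ : {m : ℤ // n ≤ m} => ℝ) 1, Memℓp (Tf f) 1 := by
    intro f
    apply memℓp_gen
    have : Summable (fun m : {m : ℤ // n ≤ m} => ‖Tf f m‖) :=
      Summable.of_nonneg_of_le (fun m => norm_nonneg _) (habs f) (hg.mul_left (C * ‖f‖))
    simpa [Real.rpow_one] using this
  set T₀ : lp (fun _ : {m : ℤ // n ≤ m} => ℝ) 1 →ₗ[ℝ] lp (fun _ : {m : ℤ // n ≤ m} => ℝ) 1 :=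
    { toFun := fun f => ⟨Tf f, hmem f⟩
      map_add' := by
        intro f h
        apply lp.ext
        funext m
        show Tf (f + h) m = Tf f m + Tf h m
        rw [hTf]
        simp only [lp.coeFn_add, Pi.add_apply, mul_add]
        exact Summable.tsum_add (hrow f m) (hrow h m)
      map_smul' := by
        intro c f
        apply lp.ext
        funext m
        show Tf (c • f) m = c * Tf f m
        rw [hTf]
        simp only [lp.coeFn_smul, Pi.smul_apply, smul_eq_mul]
        rw [← tsum_mul_left]
        congr 1
        funext l
        ring } with hT₀
  set G : ℝ := ∑' m : {m : ℤ // n ≤ m}, g m with hG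
  have hTbound : ∀ f : lp (fun _ : {m : ℤ // n ≤ m} => ℝ) 1, ‖T₀ f‖ ≤ (C * G) * ‖f‖ := by
    intro f
    rw [hnorm_eq (T₀ f)]
    show ∑' m : {m : ℤ // n ≤ m}, ‖Tf f m‖ ≤ _
    calc ∑' m : {m : ℤ // n ≤ m}, ‖Tf f m‖
        ≤ ∑' m : {m : ℤ // n ≤ m}, C * ‖f‖ * g m := by
          refine Summable.tsum_le_tsum (habs f) ?_ (hg.mul_left _)
          exact Summable.of_nonneg_of_le (fun m => norm_nonneg _) (habs f)
            (hg.mul_left (C * ‖f‖))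
      _ = (C * ‖f‖) * G := by rw [hG, ← tsum_mul_left]
      _ = (C * G) * ‖f‖ := by ring
  set T : lp (fun _ : {m : ℤ // n ≤ m} => ℝ) 1 →L[ℝ] lp (fun _ : {m : ℤ // n ≤ m} => ℝ) 1 := T₀.mkContinuous (C * G) hTbound with hT
  have hTapp : ∀ (f : lp (fun _ : {m : ℤ // n ≤ m} => ℝ) 1) (m : {m : ℤ // n ≤ m}), (T f : ∀ _ : {m : ℤ // n ≤ m}, ℝ) m = Tf f m := fun f m => rfl
  -- the finite-rank approximations
  set evalCLM : {m : ℤ // n ≤ m} → (lp (fun _ : {m : ℤ // n ≤ m} => ℝ) 1 →L[ℝ] ℝ) := fun m =>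
    LinearMap.mkContinuous
      { toFun := fun f : lp (fun _ : {m : ℤ // n ≤ m} => ℝ) 1 => f m
        map_add' := by intro f h; simp [lp.coeFn_add]
        map_smul' := by intro c f; simp [lp.coeFn_smul] }
      1 (fun f => by show ‖f m‖ ≤ 1 * ‖f‖; simpa using lp.norm_apply_le_norm one_ne_zero f m) with hevalCLM
  set Ts : Finset {m : ℤ // n ≤ m} → (lp (fun _ : {m : ℤ // n ≤ m} => ℝ) 1 →L[ℝ] lp (fun _ : {m : ℤ // n ≤ m} => ℝ) 1) := fun s =>
    ∑ m ∈ s, (((evalCLM m).comp T).smulRight (lp.single 1 m (1:ℝ))) with hTs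
  have hTs_compact : ∀ s : Finset {m : ℤ // n ≤ m}, IsCompactOperator (Ts s) := by
    intro s
    induction s using Finset.induction_on with
    | empty =>
        simp only [hTs, Finset.sum_empty]
        exact isCompactOperator_zero
    | insert _ _ h ih =>
        simp only [hTs] at ih ⊢
        rw [Finset.sum_insert h]
        exact (glm_rankone_isCompactOperator _ _).add ih
  have hTs_apply : ∀ (s : Finset {m : ℤ // n ≤ m}) (f : lp (fun _ : {m : ℤ // n ≤ m} => ℝ) 1) (m' : {m : ℤ // n ≤ m}),
      (Ts s f : ∀ _ : {m : ℤ // n ≤ m}, ℝ) m' = if m' ∈ s then Tf f m' else 0 := by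
    intro s f m'
    rw [hTs]
    rw [ContinuousLinearMap.sum_apply, lp.coeFn_sum, Finset.sum_apply]
    have hterm : ∀ m : {m : ℤ // n ≤ m}, ((((evalCLM m).comp T).smulRight (lp.single 1 m (1:ℝ))) f
        : ∀ _ : {m : ℤ // n ≤ m}, ℝ) m' = if m' = m then Tf f m' else 0 := by
      intro m
      rw [ContinuousLinearMap.smulRight_apply, lp.coeFn_smul, Pi.smul_apply]
      by_cases hmm : m' = m
      · subst hmm
        rw [if_pos rfl, lp.single_apply_self]
        rw [smul_eq_mul, mul_one]
        exact hTapp f m'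
      · rw [if_neg hmm, lp.single_apply_ne 1 m _ hmm, smul_zero]
    rw [Finset.sum_congr rfl (fun m _ => hterm m)]
    exact Finset.sum_ite_eq s m' (fun _ => Tf f m')
  have hdiff : ∀ (s : Finset {m : ℤ // n ≤ m}) (f : lp (fun _ : {m : ℤ // n ≤ m} => ℝ) 1),
      ‖T f - Ts s f‖ ≤ (C * ∑' m : {m : {m : ℤ // n ≤ m} // m ∉ s}, g m.1) * ‖f‖ := by
    intro s f
    rw [hnorm_eq (T f - Ts s f)]
    have hptw : ∀ m : {m : ℤ // n ≤ m}, ‖((T f - Ts s f : lp (fun _ : {m : ℤ // n ≤ m} => ℝ) 1) : ∀ _ : {m : ℤ // n ≤ m}, ℝ) m‖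
        = ({m : {m : ℤ // n ≤ m} | m ∉ s}).indicator (fun m => ‖Tf f m‖) m := by
      intro m
      rw [lp.coeFn_sub, Pi.sub_apply, hTapp, hTs_apply]
      by_cases hm : m ∈ s
      · rw [if_pos hm, sub_self, Set.indicator_of_notMem (by simpa using hm), norm_zero]
      · rw [if_neg hm, sub_zero, Set.indicator_of_mem (by simpa using hm)]
    calc ∑' m : {m : ℤ // n ≤ m}, ‖((T f - Ts s f : lp (fun _ : {m : ℤ // n ≤ m} => ℝ) 1) : ∀ _ : {m : ℤ // n ≤ m}, ℝ) m‖
        = ∑' m : {m : ℤ // n ≤ m}, ({m : {m : ℤ // n ≤ m} | m ∉ s}).indicator (fun m => ‖Tf f m‖) m := by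
          congr 1; funext m; exact hptw m
      _ = ∑' m : {m : {m : ℤ // n ≤ m} // m ∉ s}, ‖Tf f m.1‖ := (tsum_subtype {m : {m : ℤ // n ≤ m} | m ∉ s} _).symm
      _ ≤ ∑' m : {m : {m : ℤ // n ≤ m} // m ∉ s}, C * ‖f‖ * g m.1 := by
          refine Summable.tsum_le_tsum (fun m => habs f m.1) ?_ ?_
          · have : Summable (fun m : {m : ℤ // n ≤ m} => ‖Tf f m‖) :=
              Summable.of_nonneg_of_le (fun m => norm_nonneg _) (habs f)
                (hg.mul_left (C * ‖f‖))
            exact this.subtype _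
          · exact ((hg.mul_left (C * ‖f‖)).subtype _)
      _ = (C * ‖f‖) * ∑' m : {m : {m : ℤ // n ≤ m} // m ∉ s}, g m.1 := tsum_mul_left
      _ = (C * ∑' m : {m : {m : ℤ // n ≤ m} // m ∉ s}, g m.1) * ‖f‖ := by ring
  haveI : Nonempty {m : ℤ // n ≤ m} := ⟨⟨n, le_refl n⟩⟩
  have hnormTs : ∀ s : Finset {m : ℤ // n ≤ m}, ‖Ts s - T‖ ≤ C * ∑' m : {m : {m : ℤ // n ≤ m} // m ∉ s}, g m.1 := by
    intro s
    rw [norm_sub_rev]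
    refine ContinuousLinearMap.opNorm_le_bound _
      (mul_nonneg hC.le (tsum_nonneg (fun m => hg0 m.1))) (fun f => ?_)
    have := hdiff s f
    simpa [ContinuousLinearMap.sub_apply] using this
  have hten : Tendsto (fun s : Finset {m : ℤ // n ≤ m} => C * ∑' m : {m : {m : ℤ // n ≤ m} // m ∉ s}, g m.1)
      atTop (𝓝 0) := by
    have := (tendsto_tsum_compl_atTop_zero g).const_mul C
    simpa using this
  have htendT : Tendsto Ts atTop (𝓝 T) := by
    rw [tendsto_iff_norm_sub_tendsto_zero]
    exact squeeze_zero (fun s => norm_nonneg _) hnormTs hten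
  have hcompact : IsCompactOperator T :=
    isCompactOperator_of_tendsto htendT (Filter.Eventually.of_forall hTs_compact)
  refine ⟨T, hcompact, fun f m => ?_⟩
  rw [hTapp f m, hTf]
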